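/- Let g : ℝ × ℝ → ℂ be measurable and suppose that ∫_ℝ |ξ| ( ∫_0^{ξ²} |g(ξ,λ)|² dλ ) dξ is finite. Then ∫_ℝ ∑_{n=1}^∞ | n·∫_0^{ξ²} g(ξ,λ)/(ξ² + n² − λ) dλ |² dξ ≤ π · ∫_ℝ |ξ| ( ∫_0^{ξ²} |g(ξ,λ)|² dλ ) dξ. In particular the left-hand side is finite. -/

import Mathlib

open MeasureTheory Real
open scoped ENNReal NNReal

lemma arctan_sub_ge {a b : ℝ} (ha : 0 ≤ a) (hab : a ≤ b) :
    (b - a) / (1 + b ^ 2) ≤ arctan b - arctan a := by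
  rcases eq_or_lt_of_le hab with rfl | hlt
  · simp
  obtain ⟨c, hc, hceq⟩ := exists_hasDerivAt_eq_slope arctan (fun x => 1 / (1 + x ^ 2)) hlt
    (Real.continuous_arctan.continuousOn) (fun x _ => Real.hasDerivAt_arctan x)
  have hc0 : 0 ≤ c := le_trans ha hc.1.le
  have hcb : c ≤ b := hc.2.le
  have h1 : (0:ℝ) < 1 + b ^ 2 := by positivity
  have h2 : (0:ℝ) < 1 + c ^ 2 := by positivity
  have hle : 1 / (1 + b ^ 2) ≤ 1 / (1 + c ^ 2) := by
    apply one_div_le_one_div_of_le h2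
    nlinarith
  have hba : 0 < b - a := by linarith
  calc (b - a) / (1 + b ^ 2) = (b - a) * (1 / (1 + b ^ 2)) := by ring
    _ ≤ (b - a) * ((arctan b - arctan a) / (b - a)) := by
        apply mul_le_mul_of_nonneg_left _ hba.le
        rw [← hceq]; exact hle
    _ = arctan b - arctan a := by field_simp

lemma sum_bound (ξ : ℝ) :
    ∑' n : ℕ+, ENNReal.ofReal (ξ ^ 2 / (ξ ^ 2 + (n : ℝ) ^ 2)) ≤
      ENNReal.ofReal π * ENNReal.ofReal |ξ| := by
  by_cases hξ : ξ = 0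
  · simp [hξ]
  have hs : 0 < |ξ| := abs_pos.mpr hξ
  set s := |ξ| with hsdef
  have hseq : s ^ 2 = ξ ^ 2 := sq_abs ξ
  set f : ℕ → ℝ := fun k => s * arctan ((k : ℝ) / s) with hf
  have key : ∀ k : ℕ, ξ ^ 2 / (ξ ^ 2 + ((k : ℝ) + 1) ^ 2) ≤ f (k + 1) - f k := by
    intro k
    have hb : (k : ℝ) / s ≤ ((k : ℝ) + 1) / s := by gcongr; linarith
    have h1 := arctan_sub_ge (show (0:ℝ) ≤ (k : ℝ) / s by positivity) hb
    have hexp : (((k:ℝ)+1)/s - (k:ℝ)/s) / (1 + (((k:ℝ)+1)/s) ^ 2)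
        = s / (ξ ^ 2 + ((k:ℝ)+1) ^ 2) := by
      rw [← hseq]; field_simp; ring
    rw [hexp] at h1
    have h2 := mul_le_mul_of_nonneg_left h1 hs.le
    have h3 : ξ ^ 2 / (ξ ^ 2 + ((k:ℝ)+1) ^ 2) = s * (s / (ξ ^ 2 + ((k:ℝ)+1) ^ 2)) := by
      rw [← hseq, sq, mul_div_assoc]
    rw [h3]
    refine h2.trans_eq ?_
    simp only [hf]
    push_cast
    ring
  have keynn : ∀ k : ℕ, 0 ≤ f (k + 1) - f k := by
    intro k
    refine le_trans ?_ (key k)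
    positivity
  have hre : ∑' n : ℕ+, ENNReal.ofReal (ξ ^ 2 / (ξ ^ 2 + (n : ℝ) ^ 2)) =
      ∑' k : ℕ, ENNReal.ofReal (ξ ^ 2 / (ξ ^ 2 + ((k : ℝ) + 1) ^ 2)) := by
    rw [← Equiv.pnatEquivNat.symm.tsum_eq]
    congr 1; funext k
    congr 3
    simp [Equiv.pnatEquivNat]
  rw [hre, ENNReal.tsum_eq_iSup_nat]
  refine iSup_le fun N => ?_
  calc ∑ k ∈ Finset.range N, ENNReal.ofReal (ξ ^ 2 / (ξ ^ 2 + ((k : ℝ) + 1) ^ 2))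
      ≤ ∑ k ∈ Finset.range N, ENNReal.ofReal (f (k + 1) - f k) :=
        Finset.sum_le_sum fun k _ => ENNReal.ofReal_le_ofReal (key k)
    _ = ENNReal.ofReal (∑ k ∈ Finset.range N, (f (k + 1) - f k)) :=
        (ENNReal.ofReal_sum_of_nonneg fun k _ => keynn k).symm
    _ = ENNReal.ofReal (f N - f 0) := by rw [Finset.sum_range_sub f]
    _ ≤ ENNReal.ofReal (π * s) := by
        apply ENNReal.ofReal_le_ofReal
        have h4 : f 0 = 0 := by simp [hf]
        have h5 := Real.arctan_lt_pi_div_two ((N : ℝ) / s)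
        rw [h4, sub_zero, hf]
        have := Real.pi_pos
        nlinarith
    _ = ENNReal.ofReal π * ENNReal.ofReal s := ENNReal.ofReal_mul Real.pi_pos.le

lemma integral_inv_sq {c A : ℝ} (hc : 0 ≤ c) (hA : c < A) :
    ∫⁻ l in Set.Ioo (0:ℝ) c, ENNReal.ofReal (((A - l)⁻¹) ^ 2) =
      ENNReal.ofReal ((A - c)⁻¹ - A⁻¹) := by
  have hcont : ContinuousOn (fun x : ℝ => ((A - x)⁻¹) ^ 2) (Set.Icc 0 c) := by
    apply ContinuousOn.pow
    apply ContinuousOn.inv₀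
    · exact (continuous_const.sub continuous_id).continuousOn
    · intro x hx
      have := hx.2
      nlinarith [hx.1]
  have hint : IntegrableOn (fun x : ℝ => ((A - x)⁻¹) ^ 2) (Set.Ioo 0 c) :=
    (hcont.integrableOn_Icc).mono_set Set.Ioo_subset_Icc_self
  rw [← ofReal_integral_eq_lintegral_ofReal hint
    (Filter.Eventually.of_forall fun x => sq_nonneg _)]
  congr 1
  have h1 : ∫ l in Set.Ioo (0:ℝ) c, ((A - l)⁻¹) ^ 2 = ∫ l in (0:ℝ)..c, ((A - l)⁻¹) ^ 2 := by
    rw [intervalIntegral.integral_of_le hc, integral_Ioc_eq_integral_Ioo]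
  rw [h1]
  have hder : ∀ x ∈ Set.uIcc (0:ℝ) c, HasDerivAt (fun y => (A - y)⁻¹) (((A - x)⁻¹) ^ 2) x := by
    intro x hx
    rw [Set.uIcc_of_le hc] at hx
    have hne : A - x ≠ 0 := by nlinarith [hx.1, hx.2]
    have hd : HasDerivAt (fun y : ℝ => A - y) (-1) x := (hasDerivAt_id x).const_sub A
    refine (hd.inv hne).congr_deriv ?_
    rw [neg_neg, one_div, inv_pow]
  have hcont' : ContinuousOn (fun x : ℝ => ((A - x)⁻¹) ^ 2) (Set.uIcc 0 c) := by
    rw [Set.uIcc_of_le hc]; exact hcont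
  rw [intervalIntegral.integral_eq_sub_of_hasDerivAt hder hcont'.intervalIntegrable]
  norm_num

lemma pointwise_bound (g : ℝ → ℝ → ℂ) (hg : Measurable (fun q : ℝ × ℝ => g q.1 q.2))
    (ξ : ℝ) (n : ℕ+) :
    ENNReal.ofReal (‖(n : ℂ) *
        ∫ l in Set.Ioo (0 : ℝ) (ξ ^ 2),
          g ξ l / ((ξ ^ 2 + (n : ℝ) ^ 2 - l : ℝ) : ℂ)‖ ^ 2)
      ≤ ENNReal.ofReal (ξ ^ 2 / (ξ ^ 2 + (n : ℝ) ^ 2)) *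
        ∫⁻ l in Set.Ioo (0 : ℝ) (ξ ^ 2), ENNReal.ofReal (‖g ξ l‖ ^ 2) := by
  set c : ℝ := ξ ^ 2 with hcdef
  set A : ℝ := ξ ^ 2 + (n : ℝ) ^ 2 with hAdef
  have hn1 : (1 : ℝ) ≤ (n : ℝ) := by exact_mod_cast n.one_le
  have hc : 0 ≤ c := sq_nonneg ξ
  have hA : c < A := by
    rw [hAdef, hcdef]; nlinarith
  have hA0 : 0 < A := lt_of_le_of_lt hc hA
  have hgξ : Measurable (g ξ) := hg.comp measurable_prodMk_left
  set F₁ : ℝ → ℝ≥0∞ := fun l => ENNReal.ofReal ‖g ξ l‖ with hF₁def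
  set F₂ : ℝ → ℝ≥0∞ := fun l => ENNReal.ofReal ((A - l)⁻¹) with hF₂def
  have hF₁ : Measurable F₁ := hgξ.norm.ennreal_ofReal
  have hF₂ : Measurable F₂ := ((measurable_const.sub measurable_id).inv).ennreal_ofReal
  have sq_half : ∀ u : ℝ≥0∞, (u ^ (1/2 : ℝ)) ^ 2 = u := fun u => by
    rw [← ENNReal.rpow_natCast (u ^ (1/2 : ℝ)) 2, ← ENNReal.rpow_mul]
    norm_num
  set t : ℝ := ‖∫ l in Set.Ioo (0 : ℝ) c, g ξ l / ((A - l : ℝ) : ℂ)‖ with htdef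
  have hz : ‖(n : ℂ) * ∫ l in Set.Ioo (0 : ℝ) c, g ξ l / ((A - l : ℝ) : ℂ)‖ = (n : ℝ) * t := by
    rw [norm_mul, htdef]
    congr 1
    push_cast
    simp
  have step1 : (ENNReal.ofReal t) ≤ ∫⁻ l in Set.Ioo (0 : ℝ) c, F₁ l * F₂ l := by
    rw [htdef, ofReal_norm]
    refine (enorm_integral_le_lintegral_enorm _).trans_eq ?_
    apply setLIntegral_congr_fun measurableSet_Ioo
    intro l hl
    have hpos : 0 < A - l := by
      have := hl.2
      rw [hAdef]; rw [hcdef] at this; nlinarith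
    beta_reduce
    rw [← ofReal_norm, norm_div, Complex.norm_real, Real.norm_eq_abs,
      abs_of_pos hpos, div_eq_mul_inv, ENNReal.ofReal_mul (norm_nonneg _)]
  have hpq : Real.HolderConjugate 2 2 := Real.HolderConjugate.two_two
  have step2 := ENNReal.lintegral_mul_le_Lp_mul_Lq
    (volume.restrict (Set.Ioo (0 : ℝ) c)) hpq hF₁.aemeasurable hF₂.aemeasurable
  set X : ℝ≥0∞ := ∫⁻ l in Set.Ioo (0 : ℝ) c, ENNReal.ofReal (‖g ξ l‖ ^ 2) with hXdef
  have hX : ∫⁻ l in Set.Ioo (0 : ℝ) c, F₁ l ^ (2 : ℝ) = X := by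
    apply lintegral_congr
    intro l
    rw [hF₁def, show (2:ℝ) = ((2:ℕ):ℝ) by norm_num, ENNReal.rpow_natCast,
      ← ENNReal.ofReal_pow (norm_nonneg _)]
  have hY : ∫⁻ l in Set.Ioo (0 : ℝ) c, F₂ l ^ (2 : ℝ) = ENNReal.ofReal ((A - c)⁻¹ - A⁻¹) := by
    rw [← integral_inv_sq hc hA]
    apply setLIntegral_congr_fun measurableSet_Ioo
    intro l hl
    have hpos : 0 < A - l := by
      have := hl.2
      rw [hAdef]; rw [hcdef] at this; nlinarith
    beta_reduce
    rw [hF₂def, show (2:ℝ) = ((2:ℕ):ℝ) by norm_num, ENNReal.rpow_natCast,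
      ← ENNReal.ofReal_pow (inv_nonneg.mpr hpos.le)]
  rw [hX, hY] at step2
  calc ENNReal.ofReal (‖(n : ℂ) * ∫ l in Set.Ioo (0 : ℝ) c, g ξ l / ((A - l : ℝ) : ℂ)‖ ^ 2)
      = ENNReal.ofReal ((n : ℝ) ^ 2) * (ENNReal.ofReal t) ^ 2 := by
        rw [hz, mul_pow, ENNReal.ofReal_mul (by positivity), ENNReal.ofReal_pow (norm_nonneg _)]
    _ ≤ ENNReal.ofReal ((n : ℝ) ^ 2) *
        ((X ^ (1/2 : ℝ) * (ENNReal.ofReal ((A - c)⁻¹ - A⁻¹)) ^ (1/2 : ℝ)) ^ 2) := by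
        gcongr
        exact step1.trans step2
    _ = (ENNReal.ofReal ((n : ℝ) ^ 2) * ENNReal.ofReal ((A - c)⁻¹ - A⁻¹)) * X := by
        rw [mul_pow, sq_half, sq_half]
        ring
    _ = ENNReal.ofReal (ξ ^ 2 / A) * X := by
        congr 1
        rw [← ENNReal.ofReal_mul (by positivity)]
        congr 1
        have hAc : A - c = (n : ℝ) ^ 2 := by rw [hAdef, hcdef]; ring
        rw [hAc]
        field_simp
        ring

theorem weighted_resolvent_sum_estimate (g : ℝ → ℝ → ℂ)
    (hg : Measurable (fun q : ℝ × ℝ => g q.1 q.2))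
    (hfin : (∫⁻ ξ : ℝ, ENNReal.ofReal |ξ| *
        ∫⁻ l in Set.Ioo (0 : ℝ) (ξ ^ 2), ENNReal.ofReal (‖g ξ l‖ ^ 2)) < ⊤) :
    (∫⁻ ξ : ℝ, ∑' n : ℕ+, ENNReal.ofReal (‖(n : ℂ) *
        ∫ l in Set.Ioo (0 : ℝ) (ξ ^ 2),
          g ξ l / ((ξ ^ 2 + (n : ℝ) ^ 2 - l : ℝ) : ℂ)‖ ^ 2))
      ≤ ENNReal.ofReal π *
        ∫⁻ ξ : ℝ, ENNReal.ofReal |ξ| *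
          ∫⁻ l in Set.Ioo (0 : ℝ) (ξ ^ 2), ENNReal.ofReal (‖g ξ l‖ ^ 2) := by
  rw [← lintegral_const_mul' (ENNReal.ofReal π) _ ENNReal.ofReal_ne_top]
  apply lintegral_mono
  intro ξ
  set G : ℝ≥0∞ :=
    ∫⁻ l in Set.Ioo (0 : ℝ) (ξ ^ 2), ENNReal.ofReal (‖g ξ l‖ ^ 2) with hGdef
  calc (∑' n : ℕ+, ENNReal.ofReal (‖(n : ℂ) *
          ∫ l in Set.Ioo (0 : ℝ) (ξ ^ 2),
            g ξ l / ((ξ ^ 2 + (n : ℝ) ^ 2 - l : ℝ) : ℂ)‖ ^ 2))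
      ≤ ∑' n : ℕ+, ENNReal.ofReal (ξ ^ 2 / (ξ ^ 2 + (n : ℝ) ^ 2)) * G :=
        ENNReal.tsum_le_tsum fun n => pointwise_bound g hg ξ n
    _ = (∑' n : ℕ+, ENNReal.ofReal (ξ ^ 2 / (ξ ^ 2 + (n : ℝ) ^ 2))) * G :=
        ENNReal.tsum_mul_right
    _ ≤ (ENNReal.ofReal π * ENNReal.ofReal |ξ|) * G :=
        mul_le_mul_left (sum_bound ξ) G
    _ = ENNReal.ofReal π * (ENNReal.ofReal |ξ| * G) := mul_assoc _ _ _
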